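/- Let f : 𝒳 → ℝ be Borel measurable with finite range, assume Leb(f₊⁻¹({y})) > 0 for every y ∈ 𝒴⁻, and assume the measure dominance condition: −∫_{f₋⁻¹({y})} ω(v) dv ≤ ∫_{f₊⁻¹({y})} ω(v) dv for every y ∈ 𝒴⁻. Define the transformed weight function ω̃ : 𝒳 → ℝ by ω̃(x) = ω(x) for x ∈ 𝒳⁺ \ 𝒳ₘ⁺, ω̃(x) = [∫_{f₊⁻¹({f(x)})} ω(v) dv + ∫_{f₋⁻¹({f(x)})} ω(v) dv] / Leb(f₊⁻¹({f(x)})) for x ∈ 𝒳ₘ⁺, and ω̃(x) = 0 for x ∈ 𝒳⁻. Then (i) ∫_{𝒳} ω(x) f(x) dx = ∫_{𝒳} ω̃(x) f(x) dx, and (ii) ω̃(x) ≥ 0 for all x ∈ 𝒳. -/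

import Mathlib

open MeasureTheory Set Real

/-- Step 2 of the proof of Lemma 2 (discrete case of the general proposition):
for a finite-range measurable `f`, under the measure dominance condition, the
transformed weight function `ω̃` reproduces the weighted-average estimand and
is nonnegative on `𝒳`. -/
theorem discrete_transformed_weights
    (𝒳 : Set ℝ) (h𝒳 : IsCompact 𝒳) (ω f ωt : ℝ → ℝ)
    (hω : ContinuousOn ω 𝒳) (hf : Measurable f)
    (hfin : (f '' 𝒳).Finite)
    (hLeb : ∀ y ∈ f '' {x ∈ 𝒳 | ω x < 0},
      0 < volume (f ⁻¹' {y} ∩ {x ∈ 𝒳 | 0 ≤ ω x}))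
    -- measure dominance condition
    (hdom : ∀ y ∈ f '' {x ∈ 𝒳 | ω x < 0},
      -∫ v in f ⁻¹' {y} ∩ {x ∈ 𝒳 | ω x < 0}, ω v
        ≤ ∫ v in f ⁻¹' {y} ∩ {x ∈ 𝒳 | 0 ≤ ω x}, ω v)
    -- defining properties of the transformed weights ω̃
    (hωt1 : ∀ x ∈ {x ∈ 𝒳 | 0 ≤ ω x} \
        {x ∈ {x ∈ 𝒳 | 0 ≤ ω x} | ∃ z ∈ {x ∈ 𝒳 | ω x < 0}, f z = f x},
      ωt x = ω x)
    (hωt2 : ∀ x ∈ {x ∈ {x ∈ 𝒳 | 0 ≤ ω x} | ∃ z ∈ {x ∈ 𝒳 | ω x < 0}, f z = f x},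
      ωt x = ((∫ v in f ⁻¹' {f x} ∩ {x ∈ 𝒳 | 0 ≤ ω x}, ω v)
                + ∫ v in f ⁻¹' {f x} ∩ {x ∈ 𝒳 | ω x < 0}, ω v)
              / (volume (f ⁻¹' {f x} ∩ {x ∈ 𝒳 | 0 ≤ ω x})).toReal)
    (hωt3 : ∀ x ∈ {x ∈ 𝒳 | ω x < 0}, ωt x = 0) :
    (∫ x in 𝒳, ω x * f x = ∫ x in 𝒳, ωt x * f x) ∧
    (∀ x ∈ 𝒳, 0 ≤ ωt x) := by
  classical
  set P := {x ∈ 𝒳 | 0 ≤ ω x} with hPdef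
  set N := {x ∈ 𝒳 | ω x < 0} with hNdef
  set M := {x ∈ P | ∃ z ∈ N, f z = f x} with hMdef
  have hPsub : P ⊆ 𝒳 := fun x hx => hx.1
  have hNsub : N ⊆ 𝒳 := fun x hx => hx.1
  have hMsubP : M ⊆ P := fun x hx => hx.1
  have h𝒳m : MeasurableSet 𝒳 := h𝒳.isClosed.measurableSet
  have hPm : MeasurableSet P := by
    have : P = 𝒳 ∩ ω ⁻¹' (Ici 0) := by
      ext x; simp [hPdef, Set.mem_sep_iff, Set.mem_preimage]
    rw [this]
    exact (hω.preimage_isClosed_of_isClosed h𝒳.isClosed isClosed_Ici).measurableSet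
  have hNeq : N = 𝒳 \ P := by
    ext x
    by_cases hx : x ∈ 𝒳 <;> simp [hNdef, hPdef, Set.mem_sep_iff, hx, not_le]
  have hNm : MeasurableSet N := hNeq ▸ h𝒳m.diff hPm
  have hYfin : (f '' N).Finite := hfin.subset (image_mono hNsub)
  set Yf := hYfin.toFinset with hYfdef
  have hYfmem : ∀ y, y ∈ Yf ↔ y ∈ f '' N := fun y => hYfin.mem_toFinset
  -- part (ii)
  have part2 : ∀ x ∈ 𝒳, 0 ≤ ωt x := by
    intro x hx
    by_cases hneg : ω x < 0
    · rw [hωt3 x ⟨hx, hneg⟩]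
    · push_neg at hneg
      by_cases hm : ∃ z ∈ N, f z = f x
      · rw [hωt2 x ⟨⟨hx, hneg⟩, hm⟩]
        obtain ⟨z, hz, hfz⟩ := hm
        have := hdom (f x) ⟨z, hz, hfz⟩
        exact div_nonneg (by linarith) ENNReal.toReal_nonneg
      · rw [hωt1 x ⟨⟨hx, hneg⟩, fun h => hm h.2⟩]
        exact hneg
  refine ⟨?_, part2⟩
  -- measurability of M
  have hM_eq : M = ⋃ y ∈ Yf, f ⁻¹' {y} ∩ P := by
    ext x
    simp only [hMdef, Set.mem_sep_iff, Set.mem_iUnion, Set.mem_inter_iff,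
      Set.mem_preimage, Set.mem_singleton_iff, hYfmem, Set.mem_image]
    constructor
    · rintro ⟨hxP,z, hz, hfz⟩
      exact ⟨f x, ⟨z, hz, hfz⟩, rfl, hxP⟩
    · rintro ⟨y, ⟨z, hz, hfz⟩, hfx, hxP⟩
      exact ⟨hxP, z, hz, by rw [hfz, hfx]⟩
  have hN_eq : N = ⋃ y ∈ Yf, f ⁻¹' {y} ∩ N := by
    ext x
    simp only [Set.mem_iUnion, Set.mem_inter_iff, Set.mem_preimage,
      Set.mem_singleton_iff, hYfmem, Set.mem_image]
    constructor
    · intro hx; exact ⟨f x, ⟨x, hx, rfl⟩, rfl, hx⟩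
    · rintro ⟨y, _, _, hx⟩; exact hx
  have hMm : MeasurableSet M := by
    rw [hM_eq]
    exact Finset.measurableSet_biUnion _
      (fun y _ => (hf (measurableSet_singleton y)).inter hPm)
  -- integrability of ω * f on 𝒳
  have hintg : IntegrableOn (fun x => ω x * f x) 𝒳 volume := by
    obtain ⟨C, hC⟩ := h𝒳.exists_bound_of_continuousOn hω
    have habs : ((fun y => |y|) '' (f '' 𝒳)).Finite := hfin.image _
    obtain ⟨D, hD⟩ := habs.bddAbove
    refine ⟨((hω.aemeasurable h𝒳m).mul hf.aemeasurable).aestronglyMeasurable, ?_⟩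
    apply HasFiniteIntegral.restrict_of_bounded (C * D) h𝒳.measure_lt_top
    filter_upwards [ae_restrict_mem h𝒳m] with x hx
    have hfD : |f x| ≤ D := hD ⟨f x, ⟨x, hx, rfl⟩, rfl⟩
    have : ‖f x‖ ≤ D := by rwa [Real.norm_eq_abs]
    calc ‖ω x * f x‖ = ‖ω x‖ * ‖f x‖ := norm_mul _ _
      _ ≤ C * D := mul_le_mul (hC x hx) this (norm_nonneg _)
          (le_trans (norm_nonneg _) (hC x hx))
  have hgP : IntegrableOn (fun x => ω x * f x) P volume := hintg.mono_set hPsub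
  have hgPM : IntegrableOn (fun x => ω x * f x) (P \ M) volume :=
    hgP.mono_set diff_subset
  have hgN : IntegrableOn (fun x => ω x * f x) N volume := hintg.mono_set hNsub
  -- pieces for each y
  have hmemYf : ∀ y ∈ Yf, y ∈ f '' N := fun y hy => (hYfmem y).mp hy
  have hSpm : ∀ y : ℝ, MeasurableSet (f ⁻¹' {y} ∩ P) :=
    fun y => (hf (measurableSet_singleton y)).inter hPm
  have hSnm : ∀ y : ℝ, MeasurableSet (f ⁻¹' {y} ∩ N) :=
    fun y => (hf (measurableSet_singleton y)).inter hNm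
  have hSpfin : ∀ y : ℝ, volume (f ⁻¹' {y} ∩ P) < ⊤ := fun y =>
    lt_of_le_of_lt (measure_mono (fun x hx => hPsub hx.2)) h𝒳.measure_lt_top
  -- ωt * f is constant on each positive piece
  have hgtSp_const : ∀ y ∈ Yf, ∀ x ∈ f ⁻¹' {y} ∩ P,
      ωt x * f x = (((∫ v in f ⁻¹' {y} ∩ P, ω v) + ∫ v in f ⁻¹' {y} ∩ N, ω v)
        / (volume (f ⁻¹' {y} ∩ P)).toReal) * y := by
    intro y hy x hx
    obtain ⟨z, hz, hfz⟩ := hmemYf y hy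
    have hfx : f x = y := hx.1
    have hxM : x ∈ M := ⟨hx.2, z, hz, by rw [hfz, hfx]⟩
    rw [hωt2 x hxM, hfx]
  have hgtSp_int : ∀ y ∈ Yf, IntegrableOn (fun x => ωt x * f x) (f ⁻¹' {y} ∩ P) volume := by
    intro y hy
    refine (integrableOn_congr_fun (hgtSp_const y hy) (hSpm y)).mpr ?_
    exact integrableOn_const (hSpfin y).ne
  -- integral values
  have e3 : ∀ y ∈ Yf, ∫ x in f ⁻¹' {y} ∩ P, ωt x * f x
      = ((∫ v in f ⁻¹' {y} ∩ P, ω v) + ∫ v in f ⁻¹' {y} ∩ N, ω v) * y := by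
    intro y hy
    rw [setIntegral_congr_fun (hSpm y) (hgtSp_const y hy), setIntegral_const, smul_eq_mul, measureReal_def]
    have hpos : (0:ℝ) < (volume (f ⁻¹' {y} ∩ P)).toReal :=
      ENNReal.toReal_pos (hLeb y (hmemYf y hy)).ne' (hSpfin y).ne
    field_simp
  have e1 : ∀ y ∈ Yf, ∫ x in f ⁻¹' {y} ∩ P, ω x * f x
      = (∫ v in f ⁻¹' {y} ∩ P, ω v) * y := by
    intro y hy
    rw [setIntegral_congr_fun (hSpm y) (g := fun x => ω x * y)
      (fun x hx => by rw [show f x = y from hx.1]), integral_mul_const]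
  have e2 : ∀ y ∈ Yf, ∫ x in f ⁻¹' {y} ∩ N, ω x * f x
      = (∫ v in f ⁻¹' {y} ∩ N, ω v) * y := by
    intro y hy
    rw [setIntegral_congr_fun (hSnm y) (g := fun x => ω x * y)
      (fun x hx => by rw [show f x = y from hx.1]), integral_mul_const]
  -- ωt * f on N and on P \ M
  have hgtN0 : ∀ x ∈ N, ωt x * f x = 0 := fun x hx => by rw [hωt3 x hx, zero_mul]
  have hgtN_int : IntegrableOn (fun x => ωt x * f x) N volume :=
    (integrableOn_congr_fun hgtN0 hNm).mpr (integrableOn_zero)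
  have hgtN_val : ∫ x in N, ωt x * f x = 0 := by
    rw [setIntegral_congr_fun hNm hgtN0, integral_zero]
  have hgtPM_eq : ∀ x ∈ P \ M, ωt x * f x = ω x * f x := fun x hx => by
    rw [hωt1 x hx]
  have hgtPM_int : IntegrableOn (fun x => ωt x * f x) (P \ M) volume :=
    (integrableOn_congr_fun hgtPM_eq (hPm.diff hMm)).mpr hgPM
  have hgtPM_val : ∫ x in P \ M, ωt x * f x = ∫ x in P \ M, ω x * f x :=
    setIntegral_congr_fun (hPm.diff hMm) hgtPM_eq
  -- pairwise disjointness
  have hpwP : Set.Pairwise ↑Yf (Function.onFun Disjoint fun y => f ⁻¹' {y} ∩ P) := by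
    intro y _ y' _ hne
    simp only [Function.onFun, Set.disjoint_left]
    rintro x ⟨hx1, _⟩ ⟨hx2, _⟩
    exact hne ((Set.mem_singleton_iff.mp hx1).symm.trans (Set.mem_singleton_iff.mp hx2))
  have hpwN : Set.Pairwise ↑Yf (Function.onFun Disjoint fun y => f ⁻¹' {y} ∩ N) := by
    intro y _ y' _ hne
    simp only [Function.onFun, Set.disjoint_left]
    rintro x ⟨hx1, _⟩ ⟨hx2, _⟩
    exact hne ((Set.mem_singleton_iff.mp hx1).symm.trans (Set.mem_singleton_iff.mp hx2))
  -- integrability on M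
  have hgM : IntegrableOn (fun x => ω x * f x) M volume := hgP.mono_set hMsubP
  have hgtM_int : IntegrableOn (fun x => ωt x * f x) M volume := by
    rw [hM_eq]
    exact integrableOn_finset_iUnion.mpr hgtSp_int
  -- decomposition of 𝒳
  have h𝒳eq : 𝒳 = (P \ M ∪ M) ∪ N := by
    rw [Set.diff_union_of_subset hMsubP, hNeq, Set.union_diff_cancel hPsub]
  have hdisj2 : Disjoint (P \ M) M := disjoint_sdiff_left
  have hdisj1 : Disjoint (P \ M ∪ M) N := by
    rw [Set.diff_union_of_subset hMsubP, hNeq]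
    exact disjoint_sdiff_right
  have key : ∀ h : ℝ → ℝ, IntegrableOn h (P \ M) volume → IntegrableOn h M volume →
      IntegrableOn h N volume →
      ∫ x in 𝒳, h x = (∫ x in P \ M, h x) + (∫ x in M, h x) + ∫ x in N, h x := by
    intro h h1 h2 h3
    rw [h𝒳eq, setIntegral_union hdisj1 hNm (h1.union h2) h3,
      setIntegral_union hdisj2 hMm h1 h2]
  rw [key _ hgPM hgM hgN, key _ hgtPM_int hgtM_int hgtN_int, hgtN_val, hgtPM_val]
  have hsplitM_g : ∫ x in M, ω x * f x
      = ∑ y ∈ Yf, ∫ x in f ⁻¹' {y} ∩ P, ω x * f x := by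
    rw [hM_eq]
    exact integral_biUnion_finset Yf (fun y _ => hSpm y) hpwP
      (fun y hy => hgP.mono_set (fun x hx => hx.2))
  have hsplitM_gt : ∫ x in M, ωt x * f x
      = ∑ y ∈ Yf, ∫ x in f ⁻¹' {y} ∩ P, ωt x * f x := by
    rw [hM_eq]
    exact integral_biUnion_finset Yf (fun y _ => hSpm y) hpwP hgtSp_int
  have hsplitN_g : ∫ x in N, ω x * f x
      = ∑ y ∈ Yf, ∫ x in f ⁻¹' {y} ∩ N, ω x * f x := by
    conv_lhs => rw [hN_eq]
    exact integral_biUnion_finset Yf (fun y _ => hSnm y) hpwN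
      (fun y hy => hgN.mono_set (fun x hx => hx.2))
  rw [hsplitM_g, hsplitM_gt, hsplitN_g]
  have : ∑ y ∈ Yf, ∫ x in f ⁻¹' {y} ∩ P, ωt x * f x
      = (∑ y ∈ Yf, ∫ x in f ⁻¹' {y} ∩ P, ω x * f x)
        + ∑ y ∈ Yf, ∫ x in f ⁻¹' {y} ∩ N, ω x * f x := by
    rw [← Finset.sum_add_distrib]
    refine Finset.sum_congr rfl fun y hy => ?_
    rw [e1 y hy, e2 y hy, e3 y hy]
    ring
  rw [this]
  ring
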